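/- For every real parameter λ ≥ 1 and all α, β ∈ Ĩ, 0 ≤ ϱ^(λ)(α, β) ≤ 1, and ϱ^(λ)(α, β) = 0 if and only if α = β. -/
import Mathlib


/-- The set of intuitionistic fuzzy values (IFVs). -/
def Itilde : Set (ℝ × ℝ) :=
  {p | 0 ≤ p.1 ∧ p.1 ≤ 1 ∧ 0 ≤ p.2 ∧ p.2 ≤ 1 ∧ p.1 + p.2 ≤ 1}

/-- Score degree `s(α) = μ_α - ν_α`. -/
def score (p : ℝ × ℝ) : ℝ := p.1 - p.2

/-- Accuracy degree `h(α) = μ_α + ν_α`. -/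
def accuracy (p : ℝ × ℝ) : ℝ := p.1 + p.2

/-- The parametric distance measure `ϱ^(λ)`. -/
noncomputable def vrhoL (l : ℝ) (a b : ℝ × ℝ) : ℝ :=
  if score a ≠ score b then (1 + l * |score a - score b|) / (1 + 2 * l)
  else |accuracy a - accuracy b| / (1 + 2 * l)

/-- For  and : , and  iff . -/
theorem vrhoL_nonneg_le_one_and_eq_zero_iff (l : ℝ) (hl : 1 ≤ l)
    (a b : ℝ × ℝ) (ha : a ∈ Itilde) (hb : b ∈ Itilde) :
    0 ≤ vrhoL l a b ∧ vrhoL l a b ≤ 1 ∧ (vrhoL l a b = 0 ↔ a = b) := by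
  obtain ⟨ha1, ha2, ha3, ha4, ha5⟩ := ha
  obtain ⟨hb1, hb2, hb3, hb4, hb5⟩ := hb
  have hd : (0:ℝ) < 1 + 2 * l := by linarith
  unfold vrhoL score accuracy
  by_cases hs : a.1 - a.2 = b.1 - b.2
  · simp only [hs, ne_eq, not_true_eq_false, if_false, if_neg (not_not.2 rfl)]
    refine ⟨div_nonneg (abs_nonneg _) hd.le, ?_, ?_⟩
    · rw [div_le_one hd]
      rw [abs_le]; constructor <;> nlinarith
    · rw [div_eq_zero_iff, abs_eq_zero]
      constructor
      · rintro (h | h)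
        · have h1 : a.1 = b.1 := by linarith
          have h2 : a.2 = b.2 := by linarith
          exact Prod.ext h1 h2
        · linarith
      · rintro rfl; left; ring
  · simp only [ne_eq, hs, not_false_eq_true, if_pos]
    have habs : |a.1 - a.2 - (b.1 - b.2)| ≤ 2 := by
      rw [abs_le]; constructor <;> nlinarith
    have hnum : (0:ℝ) < 1 + l * |a.1 - a.2 - (b.1 - b.2)| := by
      have := abs_nonneg (a.1 - a.2 - (b.1 - b.2))
      nlinarith
    refine ⟨le_of_lt (div_pos hnum hd), ?_, ?_⟩
    · rw [div_le_one hd]; nlinarith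
    · constructor
      · intro h
        exact absurd h (ne_of_gt (div_pos hnum hd))
      · rintro rfl; exact absurd rfl hs
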